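/- Define c_{n,k} = (1/(n+1))·C(n+1,k) · Σ_{i=2k}^{n} (n-i+1)·C(n-k+1, i-2k). Then for every positive integer n, the sequence (c_{n,k})_{k=0}^{⌊n/2⌋} is log-concave: c_{n,k}² ≥ c_{n,k+1}·c_{n,k-1} for all 1 ≤ k ≤ ⌊n/2⌋ - 1 (with the convention c_{n,k}=0 for k outside [0,⌊n/2⌋]). -/

import Mathlib

open Finset

/-- `d n k = Σ_{i=2k}^{n} (n-i+1)·C(n-k+1, i-2k)`. -/
def d (n k : ℕ) : ℕ :=
  ∑ i ∈ Finset.Icc (2 * k) n, (n - i + 1) * Nat.choose (n - k + 1) (i - 2 * k)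

/-- `c n k = (C(n+1,k)/(n+1)) · d n k` for `0 ≤ k ≤ ⌊n/2⌋`, and `0` otherwise:
the coefficients of the inverse Kazhdan–Lusztig polynomial of the thagomizer
matroid `T_n`. -/
noncomputable def c (n k : ℕ) : ℚ :=
  if k ≤ n / 2 then (Nat.choose (n + 1) k : ℚ) / ((n : ℚ) + 1) * (d n k : ℚ) else 0

def e (N m : ℕ) : ℕ := ∑ j ∈ range (m + 1), (m + 1 - j) * Nat.choose N j

lemma e_zero (N : ℕ) : e N 0 = 1 := by simp [e]

lemma e_pascal (N m : ℕ) : e (N + 1) (m + 1) = e N (m + 1) + e N m := by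
  have h1 : e (N + 1) (m + 1)
      = (∑ j ∈ range (m + 1), ((m + 1 - j) * Nat.choose N j
          + (m + 1 - j) * Nat.choose N (j + 1))) + (m + 2) := by
    show ∑ j ∈ range (m + 2), (m + 2 - j) * Nat.choose (N + 1) j = _
    rw [Finset.sum_range_succ']
    simp [Nat.choose_succ_succ, Nat.succ_sub_succ, mul_add]
  have h2 : e N (m + 1) = (∑ j ∈ range (m + 1), (m + 1 - j) * Nat.choose N (j + 1)) + (m + 2) := by
    show ∑ j ∈ range (m + 2), (m + 2 - j) * Nat.choose N j = _
    rw [Finset.sum_range_succ']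
    simp [Nat.succ_sub_succ]
  rw [h1, h2, Finset.sum_add_distrib]
  show (e N m) + _ + _ = _
  ring

lemma d_eq_zero {n k : ℕ} (h : n < 2 * k) : d n k = 0 := by
  unfold d
  rw [Finset.Icc_eq_empty (by omega)]
  rfl

lemma d_pos {n k : ℕ} (h : 2 * k ≤ n) : 0 < d n k := by
  unfold d
  have hm : (2 * k) ∈ Icc (2 * k) n := by simp [h]
  have := Finset.single_le_sum
    (f := fun i => (n - i + 1) * Nat.choose (n - k + 1) (i - 2 * k))
    (fun i _ => Nat.zero_le _) hm
  simp at this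
  omega

lemma d_eq (n k : ℕ) (h : 2 * k ≤ n) : d n k = e (n - k + 1) (n - 2 * k) := by
  unfold d e
  rw [show Icc (2 * k) n = Ico (2 * k) (n + 1) by
      rw [Nat.Icc_eq_range', Nat.Ico_eq_range'], Finset.sum_Ico_eq_sum_range]
  apply Finset.sum_congr
  · congr 1
    omega
  · intro j hj
    simp only [mem_range] at hj
    have h1 : n - (2 * k + j) + 1 = n - 2 * k + 1 - j := by omega
    have h2 : 2 * k + j - 2 * k = j := by omega
    rw [h1, h2]

lemma d_rec (n k : ℕ) : d (n + 2) (k + 1) = d (n + 1) (k + 1) + d n k := by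
  rcases Nat.lt_trichotomy (2 * k) n with h | h | h
  · have e1 : d (n + 2) (k + 1) = e (n - k + 1 + 1) (n - 2 * k - 1 + 1) := by
      rw [d_eq (n + 2) (k + 1) (by omega)]
      congr 1 <;> omega
    have e2 : d (n + 1) (k + 1) = e (n - k + 1) (n - 2 * k - 1) := by
      rw [d_eq (n + 1) (k + 1) (by omega)]
      congr 1 <;> omega
    have e3 : d n k = e (n - k + 1) (n - 2 * k - 1 + 1) := by
      rw [d_eq n k (by omega)]
      congr 1
      omega
    rw [e1, e2, e3, e_pascal]
    ring
  · have e1 : d (n + 2) (k + 1) = e (k + 2) 0 := by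
      rw [d_eq (n + 2) (k + 1) (by omega)]
      congr 1 <;> omega
    have e2 : d (n + 1) (k + 1) = 0 := d_eq_zero (by omega)
    have e3 : d n k = e (k + 1) 0 := by
      rw [d_eq n k (by omega)]
      congr 1 <;> omega
    rw [e1, e2, e3, e_zero, e_zero]
  · rw [d_eq_zero (by omega), d_eq_zero (by omega), d_eq_zero (by omega)]

lemma absorb (N i : ℕ) : (N + 1 - i) * Nat.choose (N + 1) i = (N + 1) * Nat.choose N i := by
  have h1 := Nat.choose_succ_right_eq (N + 1) i
  have h2 := Nat.add_one_mul_choose_eq N i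
  rw [mul_comm, ← h1, ← h2]

lemma d_zero (n : ℕ) : d n 0 = (n + 1) * 2 ^ n := by
  unfold d
  simp only [Nat.mul_zero, Nat.sub_zero]
  rw [show Icc 0 n = range (n + 1) by
    rw [← Nat.Ico_zero_eq_range, Nat.Icc_eq_range', Nat.Ico_eq_range']]
  rw [Finset.sum_congr rfl (fun i hi => ?_), ← Finset.mul_sum, Nat.sum_range_choose]
  simp only [mem_range] at hi
  rw [show n - i + 1 = n + 1 - i by omega, absorb]

lemma sum_shifted (n c : ℕ) :
    ∑ j ∈ range (n + 1), (n + 1 - j + c) * Nat.choose (n + 1 + c) j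
      = (n + 1 + c) * ∑ j ∈ range (n + 1), Nat.choose (n + c) j := by
  rw [Finset.mul_sum]
  apply Finset.sum_congr rfl
  intro j hj
  simp only [mem_range] at hj
  rw [show n + 1 - j + c = n + c + 1 - j by omega, show n + 1 + c = n + c + 1 by omega, absorb]

lemma d_one (n : ℕ) : d (n + 2) 1 = n * 2 ^ (n + 1) + 1 := by
  have key : d (n + 2) 1 = ∑ j ∈ range (n + 1), (n + 1 - j) * Nat.choose (n + 2) j := by
    unfold d
    rw [show Icc (2 * 1) (n + 2) = Ico 2 (n + 3) by
        rw [Nat.Icc_eq_range', Nat.Ico_eq_range'], Finset.sum_Ico_eq_sum_range]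
    apply Finset.sum_congr
    · congr 1
    · intro j hj
      simp only [mem_range] at hj
      have h1 : n + 2 - (2 + j) + 1 = n + 1 - j := by omega
      have h2 : 2 + j - 2 * 1 = j := by omega
      have h3 : n + 2 - 1 + 1 = n + 2 := by omega
      rw [h1, h2, h3]
  -- termwise: add ∑ C(n+2,j) to both sides
  have termwise : ∑ j ∈ range (n + 1), (n + 1 - j) * Nat.choose (n + 2) j
      + ∑ j ∈ range (n + 1), Nat.choose (n + 2) j
      = (n + 2) * ∑ j ∈ range (n + 1), Nat.choose (n + 1) j := by
    rw [← Finset.sum_add_distrib, ← sum_shifted n 1]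
    apply Finset.sum_congr rfl
    intro j hj
    simp only [mem_range] at hj
    have : n + 1 - j + 1 = n + 2 - j := by omega
    rw [show n + 1 + 1 = n + 2 from rfl]
    nlinarith [this]

  set S := ∑ j ∈ range (n + 1), (n + 1 - j) * Nat.choose (n + 2) j with hS
  set x := ∑ j ∈ range (n + 1), Nat.choose (n + 2) j with hx
  set y := ∑ j ∈ range (n + 1), Nat.choose (n + 1) j with hy
  have hxv : x + (n + 2) + 1 = 2 ^ (n + 2) := by
    have h := Nat.sum_range_choose (n + 2)
    rw [show n + 3 = (n + 2) + 1 from rfl] at h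
    rw [Finset.sum_range_succ, Finset.sum_range_succ] at h
    rw [Nat.choose_self, Nat.choose_succ_self_right] at h
    omega
  have hyv : y + 1 = 2 ^ (n + 1) := by
    have h := Nat.sum_range_choose (n + 1)
    rw [Finset.sum_range_succ, Nat.choose_self] at h
    omega
  have hmul : (n + 2) * y = n * y + 2 * y := by ring
  have hny : n * y + n = n * 2 ^ (n + 1) := by
    have : n * (y + 1) = n * 2 ^ (n + 1) := by rw [hyv]
    nlinarith [this]
  rw [key]
  rw [hmul] at termwise
  generalize hA : n * y = A at *
  generalize hB : n * 2 ^ (n + 1) = B at *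
  generalize hP : (2:ℕ) ^ (n + 1) = P at *
  have h2P : (2:ℕ) ^ (n + 2) = 2 * P := by rw [← hP]; ring
  omega

lemma d_two (n : ℕ) : d (n + 5) 2 = n * 2 ^ (n + 3) + n + 6 := by
  have key : d (n + 5) 2 = ∑ j ∈ range (n + 2), (n + 2 - j) * Nat.choose (n + 4) j := by
    unfold d
    rw [show Icc (2 * 2) (n + 5) = Ico 4 (n + 6) by
        rw [Nat.Icc_eq_range', Nat.Ico_eq_range'], Finset.sum_Ico_eq_sum_range]
    apply Finset.sum_congr
    · congr 1
    · intro j hj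
      simp only [mem_range] at hj
      have h1 : n + 5 - (4 + j) + 1 = n + 2 - j := by omega
      have h2 : 4 + j - 2 * 2 = j := by omega
      have h3 : n + 5 - 2 + 1 = n + 4 := by omega
      rw [h1, h2, h3]
  have termwise : ∑ j ∈ range (n + 2), (n + 2 - j) * Nat.choose (n + 4) j
      + 2 * ∑ j ∈ range (n + 2), Nat.choose (n + 4) j
      = (n + 4) * ∑ j ∈ range (n + 2), Nat.choose (n + 3) j := by
    rw [Finset.mul_sum, ← Finset.sum_add_distrib]
    have := sum_shifted (n + 1) 2
    rw [show n + 1 + 1 = n + 2 from rfl, show n + 1 + 2 = n + 3 from rfl] at this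
    rw [← this]
    apply Finset.sum_congr rfl
    intro j hj
    ring
  set S := ∑ j ∈ range (n + 2), (n + 2 - j) * Nat.choose (n + 4) j with hS
  set x := ∑ j ∈ range (n + 2), Nat.choose (n + 4) j with hx
  set y := ∑ j ∈ range (n + 2), Nat.choose (n + 3) j with hy
  have hxv : 2 * x + (n * n + 7 * n + 12) + 2 * (n + 5) = 2 ^ (n + 5) := by
    have h := Nat.sum_range_choose (n + 4)
    rw [show n + 5 = (n + 4) + 1 from rfl, Finset.sum_range_succ, Finset.sum_range_succ,
      Finset.sum_range_succ, Nat.choose_self, Nat.choose_succ_self_right] at h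
    have hsym : Nat.choose (n + 4) (n + 2) = Nat.choose (n + 4) 2 := by
      rw [show n + 2 = n + 4 - 2 by omega, Nat.choose_symm (by omega)]
    rw [hsym, ← hx] at h
    have h2c : Nat.choose (n + 4) 2 * 2 = (n + 4) * (n + 3) := by
      have h0 := Nat.choose_succ_right_eq (n + 4) 1
      rw [show n + 4 - 1 = n + 3 by omega, Nat.choose_one_right] at h0
      exact h0
    have hexp : (n + 4) * (n + 3) = n * n + 7 * n + 12 := by ring
    rw [hexp] at h2c
    have hpow : (2:ℕ) ^ (n + 5) = 2 * 2 ^ (n + 4) := by ring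
    generalize hcc : Nat.choose (n + 4) 2 = CC at h h2c
    generalize hnn : n * n = N2 at h2c ⊢
    generalize hq4 : (2:ℕ) ^ (n + 4) = Q4 at h hpow
    omega
  have hyv : y + (n + 3) + 1 = 2 ^ (n + 3) := by
    have h := Nat.sum_range_choose (n + 3)
    rw [show n + 4 = (n + 3) + 1 from rfl, Finset.sum_range_succ, Finset.sum_range_succ,
      Nat.choose_self, Nat.choose_succ_self_right] at h
    rw [← hy] at h
    omega
  rw [key]
  have E1 : S + 2 * x = n * y + 4 * y := by rw [termwise]; ring
  have hny : n * y + (n * n + 4 * n) = n * 2 ^ (n + 3) := by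
    have h : n * (y + (n + 3) + 1) = n * 2 ^ (n + 3) := by rw [hyv]
    calc n * y + (n * n + 4 * n) = n * (y + (n + 3) + 1) := by ring
    _ = _ := h
  generalize hA : n * y = A at E1 hny
  generalize hB : n * 2 ^ (n + 3) = B at hny ⊢
  generalize hC : n * n = C2 at hxv hny
  generalize hQ : (2:ℕ) ^ (n + 3) = Q at hyv hB
  have h4Q : (2:ℕ) ^ (n + 5) = 4 * Q := by rw [← hQ]; ring
  omega

lemma choose_lc (N j : ℕ) :
    Nat.choose N (j + 2) * Nat.choose N j ≤ Nat.choose N (j + 1) ^ 2 := by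
  rcases le_or_gt N (j + 1) with h | h
  · rw [Nat.choose_eq_zero_of_lt (by omega)]
    simp
  · have h1 := Nat.choose_succ_right_eq N (j + 1)
    have h2 := Nat.choose_succ_right_eq N j
    have hpos : 0 < (j + 2) * (N - j) := by
      have : 0 < N - j := by omega
      positivity
    apply Nat.le_of_mul_le_mul_right _ hpos
    calc Nat.choose N (j + 2) * Nat.choose N j * ((j + 2) * (N - j))
        = (Nat.choose N (j + 2) * (j + 2)) * (Nat.choose N j * (N - j)) := by ring
      _ = (Nat.choose N (j + 1) * (N - (j + 1))) * (Nat.choose N (j + 1) * (j + 1)) := by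
          rw [h1, ← h2]
      _ = Nat.choose N (j + 1) ^ 2 * ((j + 1) * (N - (j + 1))) := by ring
      _ ≤ Nat.choose N (j + 1) ^ 2 * ((j + 2) * (N - j)) := by
          apply Nat.mul_le_mul_left
          apply Nat.mul_le_mul (by omega) (by omega)

lemma two_pow_lower (s : ℕ) : s + 1 ≤ 2 ^ s := Nat.lt_two_pow_self (n := s)

lemma two_pow_lower' (s : ℕ) : s * s + 11 * s + 33 ≤ 72 * 2 ^ s := by
  induction s with
  | zero => norm_num
  | succ s ih =>
    have : (2:ℕ) ^ (s + 1) = 2 * 2 ^ s := by ring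
    rw [this]
    nlinarith [ih]

/-- base case for T at column 0 -/
lemma T0L (s : ℕ) : d (s + 3) 0 * d (s + 2) 1 ≤ d (s + 3) 1 * d (s + 2) 0 := by
  rw [d_zero, d_zero, d_one, show s + 3 = (s + 1) + 2 from rfl, d_one]
  have ht := two_pow_lower s
  have p1 : (2:ℕ) ^ (s + 1) = 2 * 2 ^ s := by ring
  have p2 : (2:ℕ) ^ (s + 2) = 4 * 2 ^ s := by ring
  have p3 : (2:ℕ) ^ (s + 3) = 8 * 2 ^ s := by ring
  rw [p1, p2, p3]
  have key : s + 5 ≤ 12 * 2 ^ s := by omega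
  have key2 : (s + 5) * (4 * 2 ^ s) ≤ 12 * 2 ^ s * (4 * 2 ^ s) :=
    Nat.mul_le_mul_right _ key
  nlinarith [key2]

/-- base case for L at column 0 -/
lemma L0L (s : ℕ) : d (s + 5) 0 * d (s + 5) 2 ≤ d (s + 5) 1 ^ 2 := by
  rw [d_zero, d_two, show s + 5 = (s + 3) + 2 from rfl, d_one]
  have ht := two_pow_lower' s
  have p4 : (2:ℕ) ^ (s + 3 + 1) = 16 * 2 ^ s := by ring
  have p5 : (2:ℕ) ^ (s + 3 + 2) = 32 * 2 ^ s := by ring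
  have p3 : (2:ℕ) ^ (s + 3) = 8 * 2 ^ s := by ring
  rw [p3, p4, p5]
  have key2 : 32 * 2 ^ s * (s * s + 11 * s + 33) ≤ 32 * 2 ^ s * (72 * 2 ^ s) :=
    Nat.mul_le_mul_left _ ht
  nlinarith [key2]

def Lp (n : ℕ) : Prop := ∀ k, d n k * d n (k + 2) ≤ d n (k + 1) ^ 2
def Tp (n : ℕ) : Prop := ∀ k, d (n + 1) k * d n (k + 1) ≤ d (n + 1) (k + 1) * d n k
def Up (n : ℕ) : Prop := ∀ k, d (n + 1) (k + 2) * d n k ≤ d (n + 1) (k + 1) * d n (k + 1)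

lemma V_of {n : ℕ} (hL : Lp n) (hU : Up n) :
    ∀ k, d (n + 1) (k + 3) * d n k ≤ d (n + 1) (k + 2) * d n (k + 1) := by
  intro k
  rcases le_or_gt (2 * (k + 2)) n with h | h
  · have p1 : 0 < d n (k + 1) := d_pos (by omega)
    have p2 : 0 < d n (k + 2) := d_pos h
    apply Nat.le_of_mul_le_mul_right _ (Nat.mul_pos p1 p2)
    calc d (n + 1) (k + 3) * d n k * (d n (k + 1) * d n (k + 2))
        = (d (n + 1) ((k + 1) + 2) * d n (k + 1)) * (d n k * d n (k + 2)) := by ring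
      _ ≤ (d (n + 1) ((k + 1) + 1) * d n ((k + 1) + 1)) * (d n (k + 1) ^ 2) :=
          Nat.mul_le_mul (hU (k + 1)) (hL k)
      _ = d (n + 1) (k + 2) * d n (k + 1) * (d n (k + 1) * d n (k + 2)) := by ring
  · rw [d_eq_zero (show n + 1 < 2 * (k + 3) by omega)]
    simp

lemma main_ind : ∀ n, Lp n ∧ Tp n ∧ Up n := by
  intro n
  induction n using Nat.strong_induction_on with
  | _ n ih =>
  match n, ih with
  | 0, _ =>
    refine ⟨fun k => ?_, fun k => ?_, fun k => ?_⟩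
    · rw [d_eq_zero (show 0 < 2 * (k + 2) by omega)]; simp
    · rw [d_eq_zero (show 0 < 2 * (k + 1) by omega)]; simp
    · rw [d_eq_zero (show 1 < 2 * (k + 2) by omega)]; simp
  | 1, _ =>
    refine ⟨fun k => ?_, fun k => ?_, fun k => ?_⟩
    · rw [d_eq_zero (show 1 < 2 * (k + 2) by omega)]; simp
    · rw [d_eq_zero (show 1 < 2 * (k + 1) by omega)]; simp
    · rw [d_eq_zero (show 2 < 2 * (k + 2) by omega)]; simp
  | (m + 2), ih =>
    obtain ⟨L0, T0, U0⟩ := ih m (by omega)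
    obtain ⟨L1, T1, U1⟩ := ih (m + 1) (by omega)
    have hV := V_of L0 U0
    have hLL : Lp (m + 2) := by
      intro k
      cases k with
      | zero =>
        match m with
        | 0 =>
          rw [d_eq_zero (show 2 < 2 * 2 by omega)]; simp
        | 1 =>
          rw [d_eq_zero (show 3 < 2 * 2 by omega)]; simp
        | 2 => decide +kernel
        | (s + 3) => exact L0L s
      | succ k =>
        have e1 : d (m + 2) (k + 1) = d (m + 1) (k + 1) + d m k := d_rec m k
        have e2 : d (m + 2) (k + 2) = d (m + 1) (k + 2) + d m (k + 1) := d_rec m (k + 1)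
        have e3 : d (m + 2) (k + 3) = d (m + 1) (k + 3) + d m (k + 2) := d_rec m (k + 2)
        rw [e1, e2, e3]
        have h1 : d (m + 1) (k + 1) * d (m + 1) (k + 3) ≤ d (m + 1) (k + 2) ^ 2 := L1 (k + 1)
        have h2 := L0 k
        have h3 : d (m + 1) (k + 1) * d m (k + 2) ≤ d (m + 1) (k + 2) * d m (k + 1) := by
          have := T0 (k + 1)
          calc d (m + 1) (k + 1) * d m (k + 2) = d (m + 1) (k + 1) * d m ((k + 1) + 1) := rfl
            _ ≤ d (m + 1) ((k + 1) + 1) * d m (k + 1) := T0 (k + 1)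
            _ = d (m + 1) (k + 2) * d m (k + 1) := rfl
        have h4 := hV k
        nlinarith [h1, h2, h3, h4]
    have hTT : Tp (m + 2) := by
      intro k
      cases k with
      | zero => exact T0L m
      | succ k =>
        have e1 : d (m + 3) (k + 1) = d (m + 2) (k + 1) + d (m + 1) k := d_rec (m + 1) k
        have e2 : d (m + 3) (k + 2) = d (m + 2) (k + 2) + d (m + 1) (k + 1) := d_rec (m + 1) (k + 1)
        rw [e1, e2]
        have h1 := U1 k
        nlinarith [h1]
    have hUU : Up (m + 2) := by
      intro k
      have e1 : d (m + 3) (k + 1) = d (m + 2) (k + 1) + d (m + 1) k := d_rec (m + 1) k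
      have e2 : d (m + 3) (k + 2) = d (m + 2) (k + 2) + d (m + 1) (k + 1) := d_rec (m + 1) (k + 1)
      rw [e1, e2]
      have h1 := hLL k
      have h2 := T1 k
      nlinarith [h1, h2]
    exact ⟨hLL, hTT, hUU⟩

/-- The sequence `(c n k)_k` is log-concave. -/
theorem stmt15 (n : ℕ) (hn : 1 ≤ n) (k : ℕ) (hk : 1 ≤ k) (hk' : k + 1 ≤ n / 2) :
    c n (k + 1) * c n (k - 1) ≤ c n k ^ 2 := by
  obtain ⟨j, rfl⟩ : ∃ j, k = j + 1 := ⟨k - 1, by omega⟩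
  have h2 : j + 1 + 1 ≤ n / 2 := hk'
  have h1 : j + 1 ≤ n / 2 := by omega
  have h0 : j ≤ n / 2 := by omega
  have hsub : j + 1 - 1 = j := by omega
  rw [hsub]
  unfold c
  rw [if_pos h2, if_pos h1, if_pos h0]
  have key : (Nat.choose (n + 1) (j + 2) * d n (j + 2)) * (Nat.choose (n + 1) j * d n j)
      ≤ (Nat.choose (n + 1) (j + 1) * d n (j + 1)) ^ 2 := by
    have b1 := choose_lc (n + 1) j
    have b2 := (main_ind n).1 j
    calc (Nat.choose (n + 1) (j + 2) * d n (j + 2)) * (Nat.choose (n + 1) j * d n j)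
        = (Nat.choose (n + 1) (j + 2) * Nat.choose (n + 1) j) * (d n j * d n (j + 2)) := by
          ring
      _ ≤ (Nat.choose (n + 1) (j + 1) ^ 2) * (d n (j + 1) ^ 2) := Nat.mul_le_mul b1 b2
      _ = (Nat.choose (n + 1) (j + 1) * d n (j + 1)) ^ 2 := by ring
  have hD : (0:ℚ) < (n : ℚ) + 1 := by positivity
  simp only [div_mul_eq_mul_div]
  rw [← mul_div_assoc, div_div, div_pow,
    show ((n:ℚ) + 1) * ((n:ℚ) + 1) = ((n:ℚ) + 1) ^ 2 by ring]
  apply div_le_div_of_nonneg_right ?_ (by positivity)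
  exact_mod_cast key
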